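/- Let k ≥ 1, z ≥ 1, and let G be a finite abelian group containing an element t with 2·t = 0 and elements b_1,…,b_z such that every g ∈ G can be written as g = ε·t + Σ_{j=1}^{z} δ_j·b_j with ε, δ_1,…,δ_z ∈ ℕ and ε + Σ δ_j ≤ k. Then |G| ≤ C(z+k, z) + C(z+k−1, z), and moreover (k+z)·( C(z+k, z) + C(z+k−1, z) ) = (2k+z)·C(k+z, z). -/

import Mathlib

lemma aux_mcard_sum {ι α : Type*} (s : Finset ι) (f : ι → Multiset α) :
    Multiset.card (∑ j ∈ s, f j) = ∑ j ∈ s, Multiset.card (f j) := by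
  classical
  induction s using Finset.induction with
  | empty => simp
  | insert a s h ih => simp [Finset.sum_insert h, ih]

lemma aux_sym_exists {z n : ℕ} (δ : Fin z → ℕ) (h : ∑ j, δ j ≤ n) :
    ∃ m : Sym (Fin (z + 1)) n, ∀ j : Fin z,
      Multiset.count (Fin.castSucc j) (m : Multiset (Fin (z + 1))) = δ j := by
  refine ⟨⟨(∑ j, δ j • ({Fin.castSucc j} : Multiset (Fin (z + 1))))
      + (n - ∑ j, δ j) • ({Fin.last z} : Multiset (Fin (z + 1))), ?_⟩, ?_⟩
  · rw [Multiset.card_add, Multiset.card_nsmul, aux_mcard_sum]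
    simp only [Multiset.card_nsmul, Multiset.card_singleton, mul_one]
    omega
  · intro j
    show Multiset.count _ (_ + _) = _
    rw [Multiset.count_add, Multiset.count_nsmul, Multiset.count_sum']
    have h1 : Multiset.count (Fin.castSucc j) ({Fin.last z} : Multiset (Fin (z + 1))) = 0 := by
      rw [Multiset.count_singleton]
      simp [(Fin.castSucc_lt_last j).ne]
    rw [h1, mul_zero, add_zero]
    have h2 : ∀ i : Fin z, Multiset.count (Fin.castSucc j)
        (δ i • ({Fin.castSucc i} : Multiset (Fin (z + 1)))) = if j = i then δ i else 0 := by
      intro i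
      rw [Multiset.count_nsmul, Multiset.count_singleton]
      by_cases hij : j = i <;> simp [hij, Fin.castSucc_inj]
    simp only [h2, Finset.sum_ite_eq, Finset.mem_univ, if_true]

/-- **Moore bound for mixed Abelian Cayley graphs with undirected degree 1 and
directed out-degree `z`.**
If a finite abelian group `G` has an involution `t` and elements `b₁,…,b_z` such that
every element of `G` is a sum `ε • t + Σ δⱼ • bⱼ` with `ε + Σ δⱼ ≤ k` (i.e. the mixed
Cayley graph has diameter at most `k`), then `|G| ≤ C(z+k, z) + C(z+k−1, z)`, and
moreover `(k+z)·(C(z+k,z) + C(z+k−1,z)) = (2k+z)·C(k+z,z)`. -/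
theorem stmt_2 {G : Type*} [AddCommGroup G] [Fintype G] (k z : ℕ)
    (hk : 1 ≤ k) (hz : 1 ≤ z) (t : G) (b : Fin z → G) (ht : 2 • t = 0)
    (hdiam : ∀ g : G, ∃ (ε : ℕ) (δ : Fin z → ℕ),
      g = ε • t + ∑ j, δ j • b j ∧ ε + ∑ j, δ j ≤ k) :
    Fintype.card G ≤ Nat.choose (z + k) z + Nat.choose (z + k - 1) z ∧
    (k + z) * (Nat.choose (z + k) z + Nat.choose (z + k - 1) z) =
      (2 * k + z) * Nat.choose (k + z) z := by
  have c1 : (z + k).choose k = (z + k).choose z := by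
    have := Nat.choose_symm (n := z + k) (k := k) (by omega)
    simpa using this.symm
  have c2 : (z + k - 1).choose (k - 1) = (z + k - 1).choose z := by
    have := Nat.choose_symm (n := z + k - 1) (k := k - 1) (by omega)
    have e3 : z + k - 1 - (k - 1) = z := by omega
    rw [e3] at this
    exact this.symm
  constructor
  · set F : Sym (Fin (z + 1)) k ⊕ Sym (Fin (z + 1)) (k - 1) → G := fun p =>
      match p with
      | .inl m => ∑ j : Fin z, Multiset.count (Fin.castSucc j) (m : Multiset (Fin (z + 1))) • b j
      | .inr m => t + ∑ j : Fin z, Multiset.count (Fin.castSucc j) (m : Multiset (Fin (z + 1))) • b j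
      with hF
    have hsurj : Function.Surjective F := by
      intro g
      obtain ⟨ε, δ, hg, hle⟩ := hdiam g
      have hts : ε • t = (ε % 2) • t := by
        conv_lhs => rw [← Nat.div_add_mod ε 2]
        rw [add_smul, mul_comm, mul_smul, ht, smul_zero, zero_add]
      rcases Nat.mod_two_eq_zero_or_one ε with h0 | h1
      · obtain ⟨m, hm⟩ := aux_sym_exists (n := k) δ (by omega)
        refine ⟨.inl m, ?_⟩
        simp only [hF]
        rw [hg, hts, h0, zero_smul, zero_add]
        exact Finset.sum_congr rfl fun j _ => by rw [hm j]
      · have hε1 : 1 ≤ ε := by have := Nat.mod_le ε 2; omega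
        obtain ⟨m, hm⟩ := aux_sym_exists (n := k - 1) δ (by omega)
        refine ⟨.inr m, ?_⟩
        simp only [hF]
        rw [hg, hts, h1, one_smul]
        congr 1
        exact Finset.sum_congr rfl fun j _ => by rw [hm j]
    have hcard := Fintype.card_le_of_surjective F hsurj
    rw [Fintype.card_sum, Sym.card_sym_eq_choose, Sym.card_sym_eq_choose,
      Fintype.card_fin] at hcard
    have e1 : z + 1 + k - 1 = z + k := by omega
    have e2 : z + 1 + (k - 1) - 1 = z + k - 1 := by omega
    rw [e1, e2, c1, c2] at hcard
    exact hcard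
  · have key : (z + k) * (z + k - 1).choose z = (z + k).choose z * k := by
      have h := Nat.add_one_mul_choose_eq (z + k - 1) (k - 1)
      have e1 : z + k - 1 + 1 = z + k := by omega
      have e2 : k - 1 + 1 = k := by omega
      rw [e1, e2, c2, c1] at h
      exact h
    have c3 : (k + z).choose z = (z + k).choose z := by rw [add_comm]
    rw [c3]
    set A := (z + k).choose z
    set B := (z + k - 1).choose z
    calc (k + z) * (A + B) = (k + z) * A + (z + k) * B := by ring
      _ = (k + z) * A + A * k := by rw [key]
      _ = (2 * k + z) * A := by ring
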